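/- arXiv:2309.07775 — 2 statements merged into one kernel-verified Lean document; each statement's English description precedes it below -/
import Mathlib

section
/- Let A and B be symmetric positive definite n×n real matrices, and set X = {x ∈ ℝⁿ : ⟨Ax, x⟩ ≤ ℏ} and P = {p ∈ ℝⁿ : ⟨Bp, p⟩ ≤ ℏ}. Then X^ℏ ⊆ P if and only if A ≤ B⁻¹ in the Löwner order (i.e. B⁻¹ − A is positive semidefinite), and X^ℏ = P if and only if A·B = I. -/
open scoped RealInnerProductSpace

noncomputable section

abbrev En (n : ℕ) := EuclideanSpace ℝ (Fin n)

def qf {m : Type*} [Fintype m] [DecidableEq m] (M : Matrix m m ℝ)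
    (z : EuclideanSpace ℝ m) : ℝ := ⟪(Matrix.toEuclideanLin M) z, z⟫

def polarDual (n : ℕ) (ℏ : ℝ) (X : Set (En n)) : Set (En n) :=
  {p | ∀ x ∈ X, ⟪x, p⟫ ≤ ℏ}

variable {m : Type*} [Fintype m] [DecidableEq m]

lemma qf_eq_dot (M : Matrix m m ℝ) (v : m → ℝ) :
    qf M ((WithLp.equiv 2 (m → ℝ)).symm v) = dotProduct v (M.mulVec v) := by
  change dotProduct v (star (M.mulVec v)) = _
  rw [star_trivial]

lemma qf_nonneg {M : Matrix m m ℝ} (hM : M.PosSemidef) (z : EuclideanSpace ℝ m) :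
    0 ≤ qf M z := by
  have := hM.dotProduct_mulVec_nonneg (WithLp.equiv 2 (m → ℝ) z)
  have h2 := qf_eq_dot M (WithLp.equiv 2 (m → ℝ) z)
  simp only [Equiv.symm_apply_apply] at h2
  rw [h2]
  simpa using this

lemma posSemidef_of_qf {M : Matrix m m ℝ} (hM : M.IsHermitian)
    (h : ∀ z, 0 ≤ qf M z) : M.PosSemidef := by
  refine Matrix.PosSemidef.of_dotProduct_mulVec_nonneg hM fun v => ?_
  have := h ((WithLp.equiv 2 (m → ℝ)).symm v)
  rw [qf_eq_dot] at this
  simpa using this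

lemma qf_smul (M : Matrix m m ℝ) (t : ℝ) (z : EuclideanSpace ℝ m) :
    qf M (t • z) = t ^ 2 * qf M z := by
  simp only [qf, map_smul, real_inner_smul_left, real_inner_smul_right]
  ring

lemma qf_sub (C D : Matrix m m ℝ) (z : EuclideanSpace ℝ m) :
    qf (C - D) z = qf C z - qf D z := by
  simp [qf, map_sub, inner_sub_left]

lemma toEuclideanLin_comp (M N : Matrix m m ℝ) (z : EuclideanSpace ℝ m) :
    Matrix.toEuclideanLin (M * N) z =
      Matrix.toEuclideanLin M (Matrix.toEuclideanLin N z) := by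
  simp [Matrix.toEuclideanLin_apply, Matrix.mulVec_mulVec]

lemma sym_inner {M : Matrix m m ℝ} (hM : M.IsHermitian) (x y : EuclideanSpace ℝ m) :
    ⟪Matrix.toEuclideanLin M x, y⟫ = ⟪x, Matrix.toEuclideanLin M y⟫ :=
  (Matrix.isHermitian_iff_isSymmetric.mp hM) x y

lemma qf_pos {M : Matrix m m ℝ} (hM : M.PosDef) {z : EuclideanSpace ℝ m}
    (hz : z ≠ 0) : 0 < qf M z := by
  have hz' : (WithLp.equiv 2 (m → ℝ)) z ≠ 0 := by
    intro h
    exact hz (by simpa using congrArg (WithLp.equiv 2 (m → ℝ)).symm h)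
  have := hM.dotProduct_mulVec_pos hz'
  have h2 := qf_eq_dot M (WithLp.equiv 2 (m → ℝ) z)
  simp only [Equiv.symm_apply_apply] at h2
  rw [h2]
  simpa using this

lemma toEuclideanLin_one_apply (z : EuclideanSpace ℝ m) :
    Matrix.toEuclideanLin (1 : Matrix m m ℝ) z = z := by
  simp [Matrix.toEuclideanLin_apply, Matrix.one_mulVec]

lemma inner_le_sqrt {M : Matrix m m ℝ} (hM : M.PosDef) (x p : EuclideanSpace ℝ m) :
    ⟪x, p⟫ ≤ Real.sqrt (qf M x) * Real.sqrt (qf M⁻¹ p) := by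
  open scoped MatrixOrder in set S := CFC.sqrt M with hSdef
  open scoped MatrixOrder in have hS : S.PosSemidef := Matrix.nonneg_iff_posSemidef.mp (CFC.sqrt_nonneg M)
  open scoped MatrixOrder in have hSS : S * S = M := CFC.sqrt_mul_sqrt_self M (Matrix.nonneg_iff_posSemidef.mpr hM.posSemidef)
  have hdet : IsUnit M.det := isUnit_iff_ne_zero.mpr hM.det_pos.ne'
  set q := Matrix.toEuclideanLin M⁻¹ p with hq
  have hMq : Matrix.toEuclideanLin M q = p := by
    rw [hq, ← toEuclideanLin_comp, Matrix.mul_nonsing_inv _ hdet, toEuclideanLin_one_apply]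
  have key : ⟪x, p⟫ = ⟪Matrix.toEuclideanLin S x, Matrix.toEuclideanLin S q⟫ := by
    rw [← hMq, ← hSS, toEuclideanLin_comp, ← sym_inner hS.1]
  have h1 : ⟪Matrix.toEuclideanLin S x, Matrix.toEuclideanLin S x⟫ = qf M x := by
    rw [sym_inner hS.1, ← toEuclideanLin_comp, hSS, qf, real_inner_comm]
  have h2 : ⟪Matrix.toEuclideanLin S q, Matrix.toEuclideanLin S q⟫ = qf M⁻¹ p := by
    rw [sym_inner hS.1, ← toEuclideanLin_comp, hSS, hMq, qf, real_inner_comm, hq]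
  have hn1 : Real.sqrt (qf M x) = ‖Matrix.toEuclideanLin S x‖ := by
    rw [← h1, real_inner_self_eq_norm_mul_norm, Real.sqrt_mul_self (norm_nonneg _)]
  have hn2 : Real.sqrt (qf M⁻¹ p) = ‖Matrix.toEuclideanLin S q‖ := by
    rw [← h2, real_inner_self_eq_norm_mul_norm, Real.sqrt_mul_self (norm_nonneg _)]
  rw [key, hn1, hn2]
  exact real_inner_le_norm _ _

lemma qf_zero_arg (M : Matrix m m ℝ) : qf M 0 = 0 := by
  simp [qf]

lemma polar_ellipsoid {n : ℕ} {ℏ : ℝ} (hℏ : 0 < ℏ) {M : Matrix (Fin n) (Fin n) ℝ}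
    (hM : M.PosDef) : polarDual n ℏ {x | qf M x ≤ ℏ} = {p | qf M⁻¹ p ≤ ℏ} := by
  have hdet : IsUnit M.det := isUnit_iff_ne_zero.mpr hM.det_pos.ne'
  ext p
  constructor
  · intro hp
    set q := Matrix.toEuclideanLin M⁻¹ p with hq
    have hMq : Matrix.toEuclideanLin M q = p := by
      rw [hq, ← toEuclideanLin_comp, Matrix.mul_nonsing_inv _ hdet, toEuclideanLin_one_apply]
    have hsnn : 0 ≤ qf M⁻¹ p := qf_nonneg hM.inv.posSemidef p
    rcases eq_or_lt_of_le hsnn with h0 | hpos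
    · show qf M⁻¹ p ≤ ℏ
      rw [← h0]; exact hℏ.le
    · set s := qf M⁻¹ p with hs
      have hqp : ⟪q, p⟫ = s := rfl
      set t := Real.sqrt (ℏ / s) with ht
      have htnn : 0 ≤ t := Real.sqrt_nonneg _
      have ht2 : t ^ 2 = ℏ / s := Real.sq_sqrt (le_of_lt (div_pos hℏ hpos))
      have hqfq : qf M q = s := by
        rw [qf, hMq, real_inner_comm]; exact hqp
      have hmem : qf M (t • q) ≤ ℏ := by
        rw [qf_smul, hqfq, ht2, div_mul_cancel₀ _ hpos.ne']
      have hts : t * s ≤ ℏ := by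
        have := hp (t • q) hmem
        rwa [real_inner_smul_left, hqp] at this
      show s ≤ ℏ
      have hts2 : t ^ 2 * s = ℏ := by rw [ht2]; field_simp
      have h4 : (t * s) ^ 2 ≤ ℏ ^ 2 := pow_le_pow_left₀ (mul_nonneg htnn hpos.le) hts 2
      have h6 : ℏ * s = (t * s) ^ 2 := by rw [← hts2]; ring
      have h7 : ℏ ^ 2 = ℏ * ℏ := sq ℏ
      have h5 : ℏ * s ≤ ℏ * ℏ := by linarith
      exact le_of_mul_le_mul_left h5 hℏ
  · intro hp x hx
    calc ⟪x, p⟫ ≤ Real.sqrt (qf M x) * Real.sqrt (qf M⁻¹ p) := inner_le_sqrt hM x p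
      _ ≤ Real.sqrt ℏ * Real.sqrt ℏ :=
          mul_le_mul (Real.sqrt_le_sqrt hx) (Real.sqrt_le_sqrt hp)
            (Real.sqrt_nonneg _) (Real.sqrt_nonneg _)
      _ = ℏ := Real.mul_self_sqrt hℏ.le

lemma subset_iff_psd {n : ℕ} {ℏ : ℝ} (hℏ : 0 < ℏ) {C D : Matrix (Fin n) (Fin n) ℝ}
    (hC : C.PosDef) (hD : D.PosDef) :
    {z : En n | qf C z ≤ ℏ} ⊆ {z | qf D z ≤ ℏ} ↔ (C - D).PosSemidef := by
  constructor
  · intro h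
    refine posSemidef_of_qf (hC.1.sub hD.1) fun z => ?_
    rw [qf_sub, sub_nonneg]
    by_cases hz : z = 0
    · simp [hz, qf_zero_arg]
    · have hc : 0 < qf C z := qf_pos hC hz
      set t := Real.sqrt (ℏ / qf C z) with ht
      have ht2 : t ^ 2 = ℏ / qf C z := Real.sq_sqrt (le_of_lt (div_pos hℏ hc))
      have h1 : qf C (t • z) ≤ ℏ := by
        rw [qf_smul, ht2, div_mul_cancel₀ _ hc.ne']
      have h2 : qf D (t • z) ≤ ℏ := h h1
      rw [qf_smul, ht2, div_mul_eq_mul_div, div_le_iff₀ hc] at h2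
      have : ℏ * qf D z ≤ ℏ * qf C z := by linarith
      exact le_of_mul_le_mul_left this hℏ
  · intro h z hz
    have h2 := qf_nonneg h z
    rw [qf_sub, sub_nonneg] at h2
    exact le_trans h2 hz

lemma psd_both_zero {M : Matrix m m ℝ} (h1 : M.PosSemidef) (h2 : (-M).PosSemidef) :
    M = 0 := by
  have hv : ∀ v : m → ℝ, M.mulVec v = 0 := by
    intro v
    have ha := h1.dotProduct_mulVec_nonneg v
    have hb := h2.dotProduct_mulVec_nonneg v
    rw [Matrix.neg_mulVec, dotProduct_neg] at hb
    have h0 : dotProduct (star v) (M.mulVec v) = 0 := le_antisymm (by linarith) ha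
    exact (h1.dotProduct_mulVec_zero_iff v).mp h0
  ext i j
  have := congrFun (hv (Pi.single j 1)) i
  simpa [Matrix.mulVec_single] using this

/-- for the ellipsoids `X = {⟨Ax,x⟩ ≤ ℏ}` and `P = {⟨Bp,p⟩ ≤ ℏ}` with `A, B`
symmetric positive definite, `Xᵸ ⊆ P ↔ A ≤ B⁻¹` (Löwner order) and `Xᵸ = P ↔ AB = 1`. -/
theorem stmt0 (n : ℕ) (ℏ : ℝ) (hℏ : 0 < ℏ)
    (A B : Matrix (Fin n) (Fin n) ℝ) (hA : A.PosDef) (hB : B.PosDef) :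
    (polarDual n ℏ {x | qf A x ≤ ℏ} ⊆ {p | qf B p ≤ ℏ} ↔ (B⁻¹ - A).PosSemidef) ∧
    (polarDual n ℏ {x | qf A x ≤ ℏ} = {p | qf B p ≤ ℏ} ↔ A * B = 1) := by
  have hdA : IsUnit A.det := isUnit_iff_ne_zero.mpr hA.det_pos.ne'
  have hdB : IsUnit B.det := isUnit_iff_ne_zero.mpr hB.det_pos.ne'
  have hXp : polarDual n ℏ {x | qf A x ≤ ℏ} = {p | qf A⁻¹ p ≤ ℏ} := polar_ellipsoid hℏ hA
  have hPp : polarDual n ℏ {p : En n | qf B p ≤ ℏ} = {p | qf B⁻¹ p ≤ ℏ} :=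
    polar_ellipsoid hℏ hB
  have hXpp : polarDual n ℏ {p : En n | qf A⁻¹ p ≤ ℏ} = {x | qf A x ≤ ℏ} := by
    have h := polar_ellipsoid hℏ hA.inv (ℏ := ℏ)
    rwa [Matrix.nonsing_inv_nonsing_inv A hdA] at h
  have hBpp : polarDual n ℏ {p : En n | qf B⁻¹ p ≤ ℏ} = {p | qf B p ≤ ℏ} := by
    have h := polar_ellipsoid hℏ hB.inv (ℏ := ℏ)
    rwa [Matrix.nonsing_inv_nonsing_inv B hdB] at h
  have anti : ∀ S T : Set (En n), S ⊆ T → polarDual n ℏ T ⊆ polarDual n ℏ S :=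
    fun S T hST p hp x hx => hp x (hST hx)
  have key : (polarDual n ℏ {x | qf A x ≤ ℏ} ⊆ {p | qf B p ≤ ℏ}) ↔ (B⁻¹ - A).PosSemidef := by
    rw [← subset_iff_psd hℏ hB.inv hA]
    constructor
    · intro h
      have h2 := anti _ _ h
      rwa [hPp, hXp, hXpp] at h2
    · intro h
      have h2 := anti _ _ h
      rwa [hBpp] at h2
  refine ⟨key, ?_⟩
  rw [hXp]
  constructor
  · intro h
    have h1 : (A⁻¹ - B).PosSemidef := (subset_iff_psd hℏ hA.inv hB).mp h.subset
    have h2 : (B - A⁻¹).PosSemidef := (subset_iff_psd hℏ hB hA.inv).mp h.symm.subset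
    have h0 : A⁻¹ - B = 0 := psd_both_zero h1 (by simpa [neg_sub] using h2)
    rw [sub_eq_zero] at h0
    rw [← h0, Matrix.mul_nonsing_inv A hdA]
  · intro h
    rw [Matrix.inv_eq_right_inv h]
end
end

section
/- Let A, B be symmetric n×n real matrices with A positive definite, and let ψ_{A,B}(x) = (πℏ)^{−n/4} (det A)^{1/4} exp(−⟨(A + iB)x, x⟩/2ℏ). Then for all z = (x, p) ∈ ℝ^{2n}, Wψ_{A,B}(z) = (πℏ)^{−n} exp(−⟨G z, z⟩/ℏ), where G is the symmetric positive definite block matrix G = [[A + B A⁻¹ B, B A⁻¹],[A⁻¹ B, A⁻¹]], i.e. ⟨Gz, z⟩ = ⟨(A + BA⁻¹B)x, x⟩ + 2⟨A⁻¹Bx, p⟩ + ⟨A⁻¹p, p⟩. -/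
set_option maxHeartbeats 1000000


open MeasureTheory Real Metric
open scoped RealInnerProductSpace

noncomputable section

/-- The `ℏ`-Fourier transform `Fψ(p) = (2πℏ)^{-n/2} ∫ e^{-i⟨p,x⟩/ℏ} ψ(x) dx`. -/
def hFourier (n : ℕ) (ℏ : ℝ) (ψ : En n → ℂ) (p : En n) : ℂ :=
  Complex.ofReal ((2 * π * ℏ) ^ (-(n : ℝ) / 2)) *
    ∫ x : En n, Complex.exp (-(Complex.I * Complex.ofReal ⟪p, x⟫) / Complex.ofReal ℏ) * ψ x

/-- The Wigner function
`Wψ(x,p) = (2πℏ)^{-n} ∫ e^{-i⟨p,y⟩/ℏ} ψ(x + y/2) conj(ψ(x - y/2)) dy`. -/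
def Wigner (n : ℕ) (ℏ : ℝ) (ψ : En n → ℂ) (x p : En n) : ℂ :=
  Complex.ofReal ((2 * π * ℏ) ^ (-(n : ℝ))) *
    ∫ y : En n, Complex.exp (-(Complex.I * Complex.ofReal ⟪p, y⟫) / Complex.ofReal ℏ) *
      ψ (x + (2 : ℝ)⁻¹ • y) * (starRingEnd ℂ) (ψ (x - (2 : ℝ)⁻¹ • y))

/-- The centered generalized Gaussian
`ψ_{A,B}(x) = (πℏ)^{-n/4} (det A)^{1/4} e^{-⟨(A+iB)x,x⟩/2ℏ}`. -/
def gaussianAB (n : ℕ) (ℏ : ℝ) (A B : Matrix (Fin n) (Fin n) ℝ) (x : En n) : ℂ :=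
  Complex.ofReal ((π * ℏ) ^ (-(n : ℝ) / 4) * A.det ^ ((1 : ℝ) / 4)) *
    Complex.exp (-(Complex.ofReal (qf A x) + Complex.I * Complex.ofReal (qf B x)) /
      (2 * Complex.ofReal ℏ))

namespace Stmt13Aux
variable {n : ℕ}

lemma toEL_mul (M N : Matrix (Fin n) (Fin n) ℝ) (v : En n) :
    Matrix.toEuclideanLin (M * N) v = Matrix.toEuclideanLin M (Matrix.toEuclideanLin N v) := by
  simp [Matrix.toEuclideanLin_apply, ← Matrix.mulVec_mulVec]

lemma toEL_one (v : En n) : Matrix.toEuclideanLin (1 : Matrix (Fin n) (Fin n) ℝ) v = v := by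
  simp [Matrix.toEuclideanLin_apply]

lemma qf_add {M : Matrix (Fin n) (Fin n) ℝ} (hM : M.IsHermitian) (u v : En n) :
    qf M (u + v) = qf M u + 2 * ⟪Matrix.toEuclideanLin M u, v⟫ + qf M v := by
  have hs := Matrix.isHermitian_iff_isSymmetric.mp hM
  have h : ⟪Matrix.toEuclideanLin M v, u⟫ = ⟪Matrix.toEuclideanLin M u, v⟫ := by
    rw [hs v u, real_inner_comm]
  simp only [qf, map_add, inner_add_left, inner_add_right]
  rw [h]; ring

lemma qf_neg (M : Matrix (Fin n) (Fin n) ℝ) (v : En n) : qf M (-v) = qf M v := by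
  simp [qf, inner_neg_left, inner_neg_right]

lemma qf_sub {M : Matrix (Fin n) (Fin n) ℝ} (hM : M.IsHermitian) (u v : En n) :
    qf M (u - v) = qf M u - 2 * ⟪Matrix.toEuclideanLin M u, v⟫ + qf M v := by
  rw [sub_eq_add_neg, qf_add hM, inner_neg_right, qf_neg]; ring

lemma qf_smul (M : Matrix (Fin n) (Fin n) ℝ) (r : ℝ) (v : En n) :
    qf M (r • v) = r ^ 2 * qf M v := by
  rw [qf, qf, LinearMap.map_smul, real_inner_smul_left, real_inner_smul_right]; ring

lemma integral_comp_toEL (M : Matrix (Fin n) (Fin n) ℝ) (hM : M.det ≠ 0) (f : En n → ℂ) :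
    ∫ y : En n, f (Matrix.toEuclideanLin M y) = |M.det|⁻¹ • ∫ z : En n, f z := by
  set L : En n →ₗ[ℝ] En n := Matrix.toEuclideanLin M with hL
  have hdet : LinearMap.det L = M.det := by
    rw [hL, Matrix.toEuclideanLin_eq_toLin, LinearMap.det_toLin]
  have hdet' : LinearMap.det L ≠ 0 := by rw [hdet]; exact hM
  let e : En n ≃ₗ[ℝ] En n := LinearMap.equivOfDetNeZero L hdet'
  have hemb : MeasurableEmbedding (⇑L) := by
    have h1 : MeasurableEmbedding (⇑e.toContinuousLinearEquiv.toHomeomorph) :=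
      e.toContinuousLinearEquiv.toHomeomorph.measurableEmbedding
    have : (⇑e.toContinuousLinearEquiv.toHomeomorph) = ⇑L := by ext v; rfl
    rwa [this] at h1
  rw [← hemb.integral_map f, Measure.map_linearMap_addHaar_eq_smul_addHaar volume hdet',
    integral_smul_measure]
  congr 1
  rw [ENNReal.toReal_ofReal (by positivity), hdet, abs_inv]

end Stmt13Aux

/-- the Wigner function of the generalized Gaussian `ψ_{A,B}` is
`Wψ_{A,B}(x,p) = (πℏ)^{-n} e^{-⟨Gz,z⟩/ℏ}` with
`⟨Gz,z⟩ = ⟨(A + BA⁻¹B)x,x⟩ + 2⟨A⁻¹Bx,p⟩ + ⟨A⁻¹p,p⟩`. -/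
theorem stmt13 (n : ℕ) (ℏ : ℝ) (hℏ : 0 < ℏ)
    (A B : Matrix (Fin n) (Fin n) ℝ) (hA : A.PosDef) (hB : B.IsSymm) (x p : En n) :
    Wigner n ℏ (gaussianAB n ℏ A B) x p =
      Complex.ofReal ((π * ℏ) ^ (-(n : ℝ))) *
        Complex.exp (-Complex.ofReal
          (qf (A + B * A⁻¹ * B) x + 2 * ⟪(Matrix.toEuclideanLin (A⁻¹ * B)) x, p⟫ + qf A⁻¹ p)
          / Complex.ofReal ℏ) := by
  classical
  have hpi : (0:ℝ) < π := Real.pi_pos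
  set S := (by open scoped MatrixOrder in exact CFC.sqrt A : Matrix (Fin n) (Fin n) ℝ) with hSdef
  have hSps : S.PosSemidef := by open scoped MatrixOrder in exact Matrix.nonneg_iff_posSemidef.mp (CFC.sqrt_nonneg A)
  have hSS : S * S = A := by
    open scoped MatrixOrder in exact CFC.sqrt_mul_sqrt_self A hA.posSemidef.nonneg
  have hdetA : 0 < A.det := hA.det_pos
  have hdetSsq : S.det * S.det = A.det := by rw [← Matrix.det_mul, hSS]
  have hdetSnn : 0 ≤ S.det := by
    rw [hSps.1.det_eq_prod_eigenvalues]
    push_cast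
    exact Finset.prod_nonneg fun i _ => hSps.eigenvalues_nonneg i
  have hdetS : 0 < S.det := by nlinarith
  have hSunit : IsUnit S.det := isUnit_iff_ne_zero.2 hdetS.ne'
  have hSSi : S * S⁻¹ = 1 := Matrix.mul_nonsing_inv S hSunit
  have hSiSi : S⁻¹ * S⁻¹ = A⁻¹ := by rw [← hSS, Matrix.mul_inv_rev]
  have hBH : B.IsHermitian := by
    rw [Matrix.IsHermitian, Matrix.conjTranspose_eq_transpose_of_trivial]; exact hB
  have hAiH : (A⁻¹).IsHermitian := hA.isHermitian.inv
  have hSiH : (S⁻¹).IsHermitian := hSps.1.inv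
  have symS := Matrix.isHermitian_iff_isSymmetric.mp hSps.1
  have symSi := Matrix.isHermitian_iff_isSymmetric.mp hSiH
  have symB := Matrix.isHermitian_iff_isSymmetric.mp hBH
  have symAi := Matrix.isHermitian_iff_isSymmetric.mp hAiH
  set q : En n := p + Matrix.toEuclideanLin B x with hq
  set w : En n := Matrix.toEuclideanLin S⁻¹ q with hw
  have hwSy : ∀ y : En n, ⟪w, Matrix.toEuclideanLin S y⟫ = ⟪q, y⟫ := by
    intro y
    rw [← symS w y, hw, ← Stmt13Aux.toEL_mul, hSSi, Stmt13Aux.toEL_one]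
  have hSynorm : ∀ y : En n, (‖Matrix.toEuclideanLin S y‖ : ℝ) ^ 2 = qf A y := by
    intro y
    have h1 : qf A y = ⟪Matrix.toEuclideanLin S y, Matrix.toEuclideanLin S y⟫ := by
      rw [qf, ← hSS, Stmt13Aux.toEL_mul, symS]
    rw [h1, real_inner_self_eq_norm_sq]
  have hwnorm : (‖w‖ : ℝ) ^ 2 = qf A⁻¹ q := by
    have h1 : qf A⁻¹ q = ⟪w, w⟫ := by
      rw [qf, ← hSiSi, Stmt13Aux.toEL_mul, symSi, hw]
    rw [h1, real_inner_self_eq_norm_sq]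
  -- the exponent identity (real part)
  have hexp : qf A x + qf A⁻¹ q =
      qf (A + B * A⁻¹ * B) x + 2 * ⟪(Matrix.toEuclideanLin (A⁻¹ * B)) x, p⟫ + qf A⁻¹ p := by
    have h1 : qf A⁻¹ q = qf A⁻¹ p
        + 2 * ⟪Matrix.toEuclideanLin (A⁻¹ * B) x, p⟫ + qf (B * A⁻¹ * B) x := by
      rw [hq, add_comm p, Stmt13Aux.qf_add hAiH]
      have h2 : ⟪Matrix.toEuclideanLin A⁻¹ (Matrix.toEuclideanLin B x), p⟫
          = ⟪Matrix.toEuclideanLin (A⁻¹ * B) x, p⟫ := by rw [Stmt13Aux.toEL_mul]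
      have h3 : qf A⁻¹ (Matrix.toEuclideanLin B x) = qf (B * A⁻¹ * B) x := by
        rw [qf, qf, ← Stmt13Aux.toEL_mul A⁻¹ B, ← symB, ← Stmt13Aux.toEL_mul,
          ← Matrix.mul_assoc]
      rw [h2, h3]; ring
    have h4 : qf (A + B * A⁻¹ * B) x = qf A x + qf (B * A⁻¹ * B) x := by
      simp [qf, map_add, inner_add_left]
    rw [h1, h4]; ring
  have hℏC : (ℏ : ℂ) ≠ 0 := by exact_mod_cast hℏ.ne'
  set Cc : ℝ := (π * ℏ) ^ (-(n : ℝ) / 4) * A.det ^ ((1 : ℝ) / 4) with hCc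
  set b : ℂ := Complex.ofReal ((4 * ℏ)⁻¹) with hbdef
  have hbre : 0 < b.re := by
    rw [hbdef, Complex.ofReal_re]; positivity
  set c : ℂ := -Complex.I / (ℏ : ℂ) with hcdef
  set g : En n → ℂ := fun v => Complex.exp (-b * (‖v‖ : ℂ) ^ 2 + c * ((⟪w, v⟫ : ℝ) : ℂ)) with hg
  set K : ℂ := ((Cc : ℝ) : ℂ) ^ 2 * Complex.exp (-((qf A x : ℝ) : ℂ) / (ℏ : ℂ)) with hK
  have key : ∀ y : En n,
      Complex.exp (-(Complex.I * Complex.ofReal ⟪p, y⟫) / Complex.ofReal ℏ) *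
        gaussianAB n ℏ A B (x + (2 : ℝ)⁻¹ • y) *
        (starRingEnd ℂ) (gaussianAB n ℏ A B (x - (2 : ℝ)⁻¹ • y)) =
      K * g (Matrix.toEuclideanLin S y) := by
    intro y
    have hu : qf A (x + (2:ℝ)⁻¹ • y) = qf A x + ⟪Matrix.toEuclideanLin A x, y⟫ + 4⁻¹ * qf A y := by
      rw [Stmt13Aux.qf_add hA.isHermitian, Stmt13Aux.qf_smul, real_inner_smul_right]; ring
    have hv : qf A (x - (2:ℝ)⁻¹ • y) = qf A x - ⟪Matrix.toEuclideanLin A x, y⟫ + 4⁻¹ * qf A y := by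
      rw [Stmt13Aux.qf_sub hA.isHermitian, Stmt13Aux.qf_smul, real_inner_smul_right]; ring
    have hBu : qf B (x + (2:ℝ)⁻¹ • y) = qf B x + ⟪Matrix.toEuclideanLin B x, y⟫ + 4⁻¹ * qf B y := by
      rw [Stmt13Aux.qf_add hBH, Stmt13Aux.qf_smul, real_inner_smul_right]; ring
    have hBv : qf B (x - (2:ℝ)⁻¹ • y) = qf B x - ⟪Matrix.toEuclideanLin B x, y⟫ + 4⁻¹ * qf B y := by
      rw [Stmt13Aux.qf_sub hBH, Stmt13Aux.qf_smul, real_inner_smul_right]; ring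
    have hqy : ⟪q, y⟫ = ⟪p, y⟫ + ⟪Matrix.toEuclideanLin B x, y⟫ := by
      rw [hq, inner_add_left]
    have hSyC : ((‖Matrix.toEuclideanLin S y‖ : ℝ) : ℂ) ^ 2 = ((qf A y : ℝ) : ℂ) := by
      exact_mod_cast congrArg Complex.ofReal (hSynorm y)
    have hcongr : ∀ (C e0 e1 e2 X Y : ℂ), e0 + e1 + e2 = X + Y →
        Complex.exp e0 * (C * Complex.exp e1) * (C * Complex.exp e2)
          = C ^ 2 * (Complex.exp X * Complex.exp Y) := by
      intro C e0 e1 e2 X Y h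
      rw [← Complex.exp_add X Y, ← h, Complex.exp_add, Complex.exp_add]; ring
    rw [gaussianAB, gaussianAB, map_mul, ← Complex.exp_conj, Complex.conj_ofReal, ← hCc,
      hK, hg]
    simp only []
    rw [mul_assoc (((Cc : ℝ) : ℂ) ^ 2)]
    refine hcongr _ _ _ _ _ _ ?_
    rw [hSyC, hwSy y, hqy, hu, hv, hBu, hBv]
    simp only [hbdef, hcdef, map_div₀, map_neg, map_add, map_sub, map_mul, map_inv₀, map_ofNat,
      Complex.conj_ofReal, Complex.conj_I, Complex.ofReal_add, Complex.ofReal_mul,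
      Complex.ofReal_sub, Complex.ofReal_inv, Complex.ofReal_ofNat]
    generalize ⟪p, y⟫ = r6
    generalize qf A x = r1
    generalize qf A y = r2
    generalize ⟪(Matrix.toEuclideanLin A) x, y⟫ = r3
    generalize qf B x = r4
    generalize ⟪(Matrix.toEuclideanLin B) x, y⟫ = r5
    generalize qf B y = r7
    field_simp [hℏC]
    have h53 : ((ℏ:ℂ)) ^ 5 * ((ℏ:ℂ))⁻¹ ^ 3 = ((ℏ:ℂ)) ^ 2 := by
      rw [inv_pow, show ((ℏ:ℂ)) ^ 5 = ((ℏ:ℂ)) ^ 2 * ((ℏ:ℂ)) ^ 3 by ring, mul_assoc,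
        mul_inv_cancel₀ (pow_ne_zero 3 hℏC), mul_one]
    linear_combination
  rw [Wigner]
  have hint : (∫ y : En n,
      Complex.exp (-(Complex.I * Complex.ofReal ⟪p, y⟫) / Complex.ofReal ℏ) *
        gaussianAB n ℏ A B (x + (2 : ℝ)⁻¹ • y) *
        (starRingEnd ℂ) (gaussianAB n ℏ A B (x - (2 : ℝ)⁻¹ • y)))
      = K * (|S.det|⁻¹ • ∫ v : En n, g v) := by
    have h0 : (∫ y : En n,
        Complex.exp (-(Complex.I * Complex.ofReal ⟪p, y⟫) / Complex.ofReal ℏ) *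
          gaussianAB n ℏ A B (x + (2 : ℝ)⁻¹ • y) *
          (starRingEnd ℂ) (gaussianAB n ℏ A B (x - (2 : ℝ)⁻¹ • y)))
        = ∫ y : En n, K * g (Matrix.toEuclideanLin S y) :=
      integral_congr_ae (Filter.Eventually.of_forall fun y => key y)
    rw [h0, integral_const_mul, Stmt13Aux.integral_comp_toEL S hdetS.ne' g]
  rw [hint]
  have hgauss : (∫ v : En n, g v)
      = ((π : ℂ) / b) ^ ((Module.finrank ℝ (En n) : ℂ) / 2) *
        Complex.exp (c ^ 2 * (‖w‖ : ℂ) ^ 2 / (4 * b)) :=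
    GaussianFourier.integral_cexp_neg_mul_sq_norm_add hbre c w
  have hfr : ((Module.finrank ℝ (En n) : ℂ) / 2) = (((n : ℝ) / 2 : ℝ) : ℂ) := by
    rw [finrank_euclideanSpace_fin]; push_cast; ring
  have hpow : ((π : ℂ) / b) ^ ((Module.finrank ℝ (En n) : ℂ) / 2)
      = (((4 * π * ℏ) ^ ((n : ℝ) / 2) : ℝ) : ℂ) := by
    have h1 : ((π : ℂ) / b) = (((4 * π * ℏ : ℝ)) : ℂ) := by
      rw [hbdef]; push_cast; field_simp
    rw [h1, hfr, ← Complex.ofReal_cpow (by positivity)]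
  have hc2 : c ^ 2 = -(1 / (ℏ : ℂ) ^ 2) := by
    rw [hcdef, div_pow, neg_sq, Complex.I_sq]; ring
  have hexpg : c ^ 2 * (‖w‖ : ℂ) ^ 2 / (4 * b) = -((qf A⁻¹ q : ℝ) : ℂ) / (ℏ : ℂ) := by
    have hwC : ((‖w‖ : ℝ) : ℂ) ^ 2 = ((qf A⁻¹ q : ℝ) : ℂ) := by
      exact_mod_cast congrArg Complex.ofReal hwnorm
    rw [hc2, hwC, hbdef]
    push_cast
    field_simp
  have habs : |S.det| = Real.sqrt A.det := by
    rw [abs_of_pos hdetS, ← hdetSsq, Real.sqrt_mul_self hdetSnn]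
  have hconst : (2 * π * ℏ) ^ (-(n : ℝ)) * Cc ^ 2 * (Real.sqrt A.det)⁻¹ *
      (4 * π * ℏ) ^ ((n : ℝ) / 2) = (π * ℏ) ^ (-(n : ℝ)) := by
    have hπℏ : (0:ℝ) < π * ℏ := by positivity
    have h42 : (2:ℝ) ^ ((2:ℕ):ℝ) = 4 := by rw [Real.rpow_natCast]; norm_num
    have h4 : ((4:ℝ) * π * ℏ) ^ ((n:ℝ)/2) = 2 ^ (n:ℝ) * (π*ℏ) ^ ((n:ℝ)/2) := by
      rw [show (4:ℝ)*π*ℏ = 4*(π*ℏ) by ring, Real.mul_rpow (by norm_num) hπℏ.le]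
      congr 1
      rw [show (4:ℝ) = (2:ℝ) ^ ((2:ℕ):ℝ) from h42.symm,
        ← Real.rpow_mul (by norm_num : (0:ℝ) ≤ 2)]
      congr 1
      push_cast; ring
    have h2 : ((2:ℝ) * π * ℏ) ^ (-(n:ℝ)) = 2 ^ (-(n:ℝ)) * (π*ℏ) ^ (-(n:ℝ)) := by
      rw [show (2:ℝ)*π*ℏ = 2*(π*ℏ) by ring, Real.mul_rpow (by norm_num) hπℏ.le]
    have hCc2 : Cc ^ 2 = (π*ℏ) ^ (-(n:ℝ)/2) * A.det ^ ((1:ℝ)/2) := by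
      rw [hCc, mul_pow, ← Real.rpow_natCast ((π*ℏ) ^ (-(n:ℝ)/4)) 2,
        ← Real.rpow_natCast (A.det ^ ((1:ℝ)/4)) 2,
        ← Real.rpow_mul hπℏ.le, ← Real.rpow_mul hdetA.le]
      norm_num
      left
      congr 1
      ring
    have hsq : (Real.sqrt A.det)⁻¹ = A.det ^ (-((1:ℝ)/2)) := by
      rw [Real.sqrt_eq_rpow, ← Real.rpow_neg hdetA.le]
    calc (2*π*ℏ) ^ (-(n:ℝ)) * Cc^2 * (Real.sqrt A.det)⁻¹ * (4*π*ℏ) ^ ((n:ℝ)/2)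
        = ((2:ℝ) ^ (-(n:ℝ)) * 2 ^ (n:ℝ)) *
            (((π*ℏ) ^ (-(n:ℝ)/2) * (π*ℏ) ^ ((n:ℝ)/2)) * (π*ℏ) ^ (-(n:ℝ))) *
            (A.det ^ ((1:ℝ)/2) * A.det ^ (-((1:ℝ)/2))) := by
          rw [h2, hCc2, hsq, h4]; ring
      _ = (π*ℏ) ^ (-(n:ℝ)) := by
          rw [← Real.rpow_add two_pos, ← Real.rpow_add hπℏ, ← Real.rpow_add hdetA]
          rw [show -(n:ℝ)/2 + (n:ℝ)/2 = 0 by ring, Real.rpow_zero, one_mul]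
          norm_num [Real.rpow_zero]
  have hT : -Complex.ofReal
        (qf (A + B * A⁻¹ * B) x + 2 * ⟪(Matrix.toEuclideanLin (A⁻¹ * B)) x, p⟫ + qf A⁻¹ p)
        / Complex.ofReal ℏ
      = -((qf A x : ℝ) : ℂ) / (ℏ : ℂ) + -((qf A⁻¹ q : ℝ) : ℂ) / (ℏ : ℂ) := by
    rw [← hexp]; push_cast; ring
  rw [hgauss, hpow, hexpg, hK, habs, hT, Complex.exp_add, ← hconst]
  simp only [Complex.real_smul]
  push_cast
  ring
end
end
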